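/- Let X = W ⊕_a Z be the absolute sum of real Banach spaces W and Z with respect to an absolute norm N which is of type 1 or of type ∞ (so W is an absolute summand of X of type 1 or ∞). If W ⊕_a Z has the Bishop–Phelps–Bollobás property for numerical radius (BPBp-nu), then W has the BPBp-nu. -/

import Mathlib

set_option maxHeartbeats 1600000


open Filter Topology

/-- `N` is an absolute norm on `ℝ²`: a norm with `N(1,0)=N(0,1)=1` and
`N(s,t)=N(|s|,|t|)`. -/
structure IsAbsoluteNorm (N : ℝ → ℝ → ℝ) : Prop where
  nonneg : ∀ s t : ℝ, 0 ≤ N s t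
  eq_zero_iff : ∀ s t : ℝ, N s t = 0 ↔ s = 0 ∧ t = 0
  triangle : ∀ s₁ t₁ s₂ t₂ : ℝ, N (s₁ + s₂) (t₁ + t₂) ≤ N s₁ t₁ + N s₂ t₂
  smul : ∀ c s t : ℝ, N (c * s) (c * t) = |c| * N s t
  one_zero : N 1 0 = 1
  zero_one : N 0 1 = 1
  abs_eq : ∀ s t : ℝ, N s t = N |s| |t|

/-- An absolute norm is of type 1 if `|x| + K|y| ≤ N(x,y)` for some `K > 0`. -/
def AbsNormTypeOne (N : ℝ → ℝ → ℝ) : Prop :=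
  ∃ K : ℝ, 0 < K ∧ ∀ x y : ℝ, |x| + K * |y| ≤ N x y

/-- An absolute norm is of type ∞ if `N(1,b₀) = 1` for some `b₀ > 0`. -/
def AbsNormTypeInfty (N : ℝ → ℝ → ℝ) : Prop :=
  ∃ b₀ : ℝ, 0 < b₀ ∧ N 1 b₀ = 1

/-- The numerical radius of a bounded linear operator on `X`:
`v(T) = sup {|x*(T x)| : ‖x‖ = ‖x*‖ = 1, x*(x) = 1}`. -/
noncomputable def NumRadius {X : Type*} [NormedAddCommGroup X] [NormedSpace ℝ X]
    (T : X →L[ℝ] X) : ℝ :=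
  sSup {r : ℝ | ∃ (x : X) (f : X →L[ℝ] ℝ),
    ‖x‖ = 1 ∧ ‖f‖ = 1 ∧ f x = 1 ∧ r = |f (T x)|}

/-- `X` has the Bishop–Phelps–Bollobás property for numerical radius. -/
def HasBPBnu (X : Type*) [NormedAddCommGroup X] [NormedSpace ℝ X] : Prop :=
  ∀ ε : ℝ, 0 < ε → ∃ η : ℝ, 0 < η ∧
    ∀ (T : X →L[ℝ] X) (x : X) (f : X →L[ℝ] ℝ),
      NumRadius T = 1 → ‖x‖ = 1 → ‖f‖ = 1 → f x = 1 → 1 - η < |f (T x)| →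
      ∃ (S : X →L[ℝ] X) (x₀ : X) (f₀ : X →L[ℝ] ℝ),
        NumRadius S = 1 ∧ ‖x₀‖ = 1 ∧ ‖f₀‖ = 1 ∧ f₀ x₀ = 1 ∧
        |f₀ (S x₀)| = 1 ∧ ‖f₀ - f‖ < ε ∧ ‖x₀ - x‖ < ε ∧ ‖S - T‖ < ε

namespace IsAbsoluteNorm
variable {N : ℝ → ℝ → ℝ}

lemma s_zero (hN : IsAbsoluteNorm N) (s : ℝ) : N s 0 = |s| := by
  have := hN.smul s 1 0
  simpa [hN.one_zero] using this

lemma zero_t (hN : IsAbsoluteNorm N) (t : ℝ) : N 0 t = |t| := by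
  have := hN.smul t 0 1
  simpa [hN.zero_one] using this

lemma mono_right (hN : IsAbsoluteNorm N) {s t t' : ℝ} (ht : 0 ≤ t) (htt : t ≤ t') : N s t ≤ N s t' := by
  rcases eq_or_lt_of_le (ht.trans htt) with h0 | h0
  · obtain rfl : t' = 0 := h0.symm
    obtain rfl : t = 0 := le_antisymm htt ht
    exact le_rfl
  · set c₁ : ℝ := (1 + t / t') / 2 with hc₁
    set c₂ : ℝ := (1 - t / t') / 2 with hc₂
    have hl : t / t' ≤ 1 := by
      rw [div_le_one h0]; exact htt
    have hg : 0 ≤ t / t' := div_nonneg ht h0.le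
    have h₁ : (0:ℝ) ≤ c₁ := by rw [hc₁]; linarith
    have h₂ : (0:ℝ) ≤ c₂ := by rw [hc₂]; linarith
    have key : N s t = N (c₁ * s + c₂ * s) (c₁ * t' + c₂ * (-t')) := by
      congr 1
      · rw [hc₁, hc₂]; ring
      · rw [hc₁, hc₂]; field_simp; ring
    rw [key]
    calc N (c₁ * s + c₂ * s) (c₁ * t' + c₂ * (-t'))
        ≤ N (c₁ * s) (c₁ * t') + N (c₂ * s) (c₂ * (-t')) := hN.triangle _ _ _ _
      _ = c₁ * N s t' + c₂ * N s (-t') := by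
          rw [hN.smul c₁ s t', hN.smul c₂ s (-t'), abs_of_nonneg h₁, abs_of_nonneg h₂]
      _ = c₁ * N s t' + c₂ * N s t' := by
          rw [show N s (-t') = N s t' from by rw [hN.abs_eq s (-t'), hN.abs_eq s t', abs_neg]]
      _ = N s t' := by
          have : c₁ + c₂ = 1 := by rw [hc₁, hc₂]; ring
          nlinarith [hN.nonneg s t']

lemma mono_left (hN : IsAbsoluteNorm N) {s s' t : ℝ} (hs : 0 ≤ s) (hss : s ≤ s') : N s t ≤ N s' t := by
  rcases eq_or_lt_of_le (hs.trans hss) with h0 | h0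
  · obtain rfl : s' = 0 := h0.symm
    obtain rfl : s = 0 := le_antisymm hss hs
    exact le_rfl
  · set c₁ : ℝ := (1 + s / s') / 2 with hc₁
    set c₂ : ℝ := (1 - s / s') / 2 with hc₂
    have hl : s / s' ≤ 1 := by rw [div_le_one h0]; exact hss
    have hg : 0 ≤ s / s' := div_nonneg hs h0.le
    have h₁ : (0:ℝ) ≤ c₁ := by rw [hc₁]; linarith
    have h₂ : (0:ℝ) ≤ c₂ := by rw [hc₂]; linarith
    have key : N s t = N (c₁ * s' + c₂ * (-s')) (c₁ * t + c₂ * t) := by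
      congr 1
      · rw [hc₁, hc₂]; field_simp; ring
      · rw [hc₁, hc₂]; ring
    rw [key]
    calc N (c₁ * s' + c₂ * (-s')) (c₁ * t + c₂ * t)
        ≤ N (c₁ * s') (c₁ * t) + N (c₂ * (-s')) (c₂ * t) := hN.triangle _ _ _ _
      _ = c₁ * N s' t + c₂ * N (-s') t := by
          rw [hN.smul c₁ s' t, hN.smul c₂ (-s') t, abs_of_nonneg h₁, abs_of_nonneg h₂]
      _ = c₁ * N s' t + c₂ * N s' t := by
          rw [show N (-s') t = N s' t from by rw [hN.abs_eq (-s') t, hN.abs_eq s' t, abs_neg]]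
      _ = N s' t := by
          have : c₁ + c₂ = 1 := by rw [hc₁, hc₂]; ring
          nlinarith [hN.nonneg s' t]

lemma mono (hN : IsAbsoluteNorm N) {s s' t t' : ℝ} (hs : 0 ≤ s) (hss : s ≤ s') (ht : 0 ≤ t) (htt : t ≤ t') :
    N s t ≤ N s' t' :=
  (hN.mono_left hs hss).trans (hN.mono_right ht htt)

lemma fst_le (hN : IsAbsoluteNorm N) {s t : ℝ} (hs : 0 ≤ s) (ht : 0 ≤ t) : s ≤ N s t := by
  have := hN.mono_right (le_refl 0) ht (s := s)
  rw [hN.s_zero, abs_of_nonneg hs] at this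
  exact this

lemma snd_le (hN : IsAbsoluteNorm N) {s t : ℝ} (hs : 0 ≤ s) (ht : 0 ≤ t) : t ≤ N s t := by
  have := hN.mono_left (le_refl 0) hs (t := t)
  rw [hN.zero_t, abs_of_nonneg ht] at this
  exact this

end IsAbsoluteNorm

section NR
variable {Y : Type*} [NormedAddCommGroup Y] [NormedSpace ℝ Y]

lemma numRadius_bddAbove (T : Y →L[ℝ] Y) :
    BddAbove {r : ℝ | ∃ (x : Y) (f : Y →L[ℝ] ℝ), ‖x‖ = 1 ∧ ‖f‖ = 1 ∧ f x = 1 ∧ r = |f (T x)|} := by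
  refine ⟨‖T‖, ?_⟩
  rintro r ⟨x, f, hx, hf, -, rfl⟩
  calc |f (T x)| ≤ ‖f‖ * ‖T x‖ := f.le_opNorm _
    _ ≤ 1 * (‖T‖ * ‖x‖) := by rw [hf]; gcongr; exact T.le_opNorm x
    _ = ‖T‖ := by rw [hx]; ring

lemma le_numRadius {T : Y →L[ℝ] Y} {x : Y} {f : Y →L[ℝ] ℝ}
    (hx : ‖x‖ = 1) (hf : ‖f‖ = 1) (hfx : f x = 1) : |f (T x)| ≤ NumRadius T :=
  le_csSup (numRadius_bddAbove T) ⟨x, f, hx, hf, hfx, rfl⟩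

lemma numRadius_le {T : Y →L[ℝ] Y} {c : ℝ} (hc : 0 ≤ c)
    (H : ∀ (x : Y) (f : Y →L[ℝ] ℝ), ‖x‖ = 1 → ‖f‖ = 1 → f x = 1 → |f (T x)| ≤ c) :
    NumRadius T ≤ c := by
  refine Real.sSup_le ?_ hc
  rintro r ⟨x, f, hx, hf, hfx, rfl⟩
  exact H x f hx hf hfx

end NR

section Setup
variable {W Z X : Type*} [NormedAddCommGroup W] [NormedSpace ℝ W]
  [NormedAddCommGroup Z] [NormedSpace ℝ Z]
  [NormedAddCommGroup X] [NormedSpace ℝ X]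
  (e : X ≃L[ℝ] W × Z)

noncomputable def Pw : X →L[ℝ] W := (ContinuousLinearMap.fst ℝ W Z).comp (e : X →L[ℝ] W × Z)
noncomputable def Pz : X →L[ℝ] Z := (ContinuousLinearMap.snd ℝ W Z).comp (e : X →L[ℝ] W × Z)
noncomputable def Iw : W →L[ℝ] X := ((e.symm : W × Z →L[ℝ] X)).comp (ContinuousLinearMap.inl ℝ W Z)
noncomputable def Iz : Z →L[ℝ] X := ((e.symm : W × Z →L[ℝ] X)).comp (ContinuousLinearMap.inr ℝ W Z)

@[simp] lemma Pw_apply (x : X) : Pw e x = (e x).1 := rfl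
@[simp] lemma Pz_apply (x : X) : Pz e x = (e x).2 := rfl
@[simp] lemma Iw_apply (w : W) : Iw e w = e.symm (w, 0) := rfl
@[simp] lemma Iz_apply (z : Z) : Iz e z = e.symm (0, z) := rfl

@[simp] lemma Pw_Iw (w : W) : Pw e (Iw e w) = w := by simp
@[simp] lemma Pz_Iw (w : W) : Pz e (Iw e w) = 0 := by simp
@[simp] lemma Pw_Iz (z : Z) : Pw e (Iz e z) = 0 := by simp
@[simp] lemma Pz_Iz (z : Z) : Pz e (Iz e z) = z := by simp

lemma esymm_eq (u : W) (v : Z) : e.symm (u, v) = Iw e u + Iz e v := by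
  simp only [Iw_apply, Iz_apply]
  rw [← map_add]
  congr 1
  simp

lemma decomp (x : X) : Iw e (Pw e x) + Iz e (Pz e x) = x := by
  rw [← esymm_eq]
  simp

lemma fdecomp (f : X →L[ℝ] ℝ) (x : X) :
    f x = (f.comp (Iw e)) (Pw e x) + (f.comp (Iz e)) (Pz e x) := by
  conv_lhs => rw [← decomp e x]
  simp

variable {N : ℝ → ℝ → ℝ} (hN : IsAbsoluteNorm N) (he : ∀ x : X, ‖x‖ = N ‖(e x).1‖ ‖(e x).2‖)


lemma norm_esymm (he : ∀ x : X, ‖x‖ = N ‖(e x).1‖ ‖(e x).2‖) (u : W) (v : Z) : ‖e.symm (u, v)‖ = N ‖u‖ ‖v‖ := by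
  rw [he (e.symm (u, v))]
  simp

lemma norm_Iw (hN : IsAbsoluteNorm N) (he : ∀ x : X, ‖x‖ = N ‖(e x).1‖ ‖(e x).2‖) (u : W) : ‖Iw e u‖ = ‖u‖ := by
  rw [Iw_apply, norm_esymm e he, norm_zero, hN.s_zero, abs_of_nonneg (norm_nonneg u)]

lemma norm_Iz (hN : IsAbsoluteNorm N) (he : ∀ x : X, ‖x‖ = N ‖(e x).1‖ ‖(e x).2‖) (v : Z) : ‖Iz e v‖ = ‖v‖ := by
  rw [Iz_apply, norm_esymm e he, norm_zero, hN.zero_t, abs_of_nonneg (norm_nonneg v)]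

lemma norm_Pw_le (hN : IsAbsoluteNorm N) (he : ∀ x : X, ‖x‖ = N ‖(e x).1‖ ‖(e x).2‖) (x : X) : ‖Pw e x‖ ≤ ‖x‖ := by
  rw [Pw_apply, he x]
  exact hN.fst_le (norm_nonneg _) (norm_nonneg _)

lemma norm_Pz_le (hN : IsAbsoluteNorm N) (he : ∀ x : X, ‖x‖ = N ‖(e x).1‖ ‖(e x).2‖) (x : X) : ‖Pz e x‖ ≤ ‖x‖ := by
  rw [Pz_apply, he x]
  exact hN.snd_le (norm_nonneg _) (norm_nonneg _)

lemma norm_comp_Iw_le (hN : IsAbsoluteNorm N) (he : ∀ x : X, ‖x‖ = N ‖(e x).1‖ ‖(e x).2‖) (f : X →L[ℝ] ℝ) : ‖f.comp (Iw e)‖ ≤ ‖f‖ := by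
  refine ContinuousLinearMap.opNorm_le_bound _ (norm_nonneg f) fun u => ?_
  calc ‖(f.comp (Iw e)) u‖ ≤ ‖f‖ * ‖Iw e u‖ := f.le_opNorm _
    _ = ‖f‖ * ‖u‖ := by rw [norm_Iw e hN he u]

lemma norm_comp_Iz_le (hN : IsAbsoluteNorm N) (he : ∀ x : X, ‖x‖ = N ‖(e x).1‖ ‖(e x).2‖) (f : X →L[ℝ] ℝ) : ‖f.comp (Iz e)‖ ≤ ‖f‖ := by
  refine ContinuousLinearMap.opNorm_le_bound _ (norm_nonneg f) fun u => ?_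
  calc ‖(f.comp (Iz e)) u‖ ≤ ‖f‖ * ‖Iz e u‖ := f.le_opNorm _
    _ = ‖f‖ * ‖u‖ := by rw [norm_Iz e hN he u]

/-- almost norming vectors -/
lemma almost_norming {E : Type*} [NormedAddCommGroup E] [NormedSpace ℝ E]
    (f : E →L[ℝ] ℝ) {δ : ℝ} (hδ : 0 < δ) : ∃ p : E, ‖p‖ ≤ 1 ∧ ‖f‖ - δ ≤ f p := by
  rcases le_or_gt ‖f‖ δ with hle | hlt
  · exact ⟨0, by simp, by simp; linarith⟩
  · obtain ⟨p, hp, hfp⟩ := f.exists_lt_apply_of_lt_opNorm (show ‖f‖ - δ < ‖f‖ by linarith)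
    rcases le_or_gt 0 (f p) with hs | hs
    · exact ⟨p, hp.le, by rw [Real.norm_eq_abs, abs_of_nonneg hs] at hfp; linarith⟩
    · refine ⟨-p, by simpa using hp.le, ?_⟩
      rw [map_neg]
      rw [Real.norm_eq_abs, abs_of_neg hs] at hfp
      linarith

/-- The key "star" inequality -/
lemma star_ineq (hN : IsAbsoluteNorm N) (he : ∀ x : X, ‖x‖ = N ‖(e x).1‖ ‖(e x).2‖) (f : X →L[ℝ] ℝ) {s t : ℝ} (hs : 0 ≤ s) (ht : 0 ≤ t) :
    s * ‖f.comp (Iw e)‖ + t * ‖f.comp (Iz e)‖ ≤ ‖f‖ * N s t := by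
  have key : ∀ δ : ℝ, 0 < δ →
      s * ‖f.comp (Iw e)‖ + t * ‖f.comp (Iz e)‖ ≤ ‖f‖ * N s t + (s + t) * δ := by
    intro δ hδ
    obtain ⟨p, hp1, hp2⟩ := almost_norming (f.comp (Iw e)) hδ
    obtain ⟨q, hq1, hq2⟩ := almost_norming (f.comp (Iz e)) hδ
    set x : X := e.symm (s • p, t • q) with hx
    have hxn : ‖x‖ ≤ N s t := by
      rw [hx, norm_esymm e he]
      refine hN.mono (norm_nonneg _) ?_ (norm_nonneg _) ?_
      · rw [norm_smul, Real.norm_eq_abs, abs_of_nonneg hs]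
        nlinarith
      · rw [norm_smul, Real.norm_eq_abs, abs_of_nonneg ht]
        nlinarith
    have hfx : f x = s * (f.comp (Iw e)) p + t * (f.comp (Iz e)) q := by
      rw [hx, esymm_eq]
      simp [mul_comm]
    have h1 : s * (f.comp (Iw e)) p + t * (f.comp (Iz e)) q ≤ ‖f‖ * N s t := by
      calc s * (f.comp (Iw e)) p + t * (f.comp (Iz e)) q = f x := hfx.symm
        _ ≤ |f x| := le_abs_self _
        _ ≤ ‖f‖ * ‖x‖ := f.le_opNorm x
        _ ≤ ‖f‖ * N s t := by gcongr
    nlinarith [mul_le_mul_of_nonneg_left hp2 hs, mul_le_mul_of_nonneg_left hq2 ht]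
  refine le_of_forall_pos_le_add fun ε hε => ?_
  have hst : (0:ℝ) < s + t + 1 := by linarith
  have h := key (ε / (s + t + 1)) (by positivity)
  have hle : (s + t) * (ε / (s + t + 1)) ≤ ε := by
    have hq : (s + t) / (s + t + 1) ≤ 1 := by rw [div_le_one hst]; linarith
    calc (s + t) * (ε / (s + t + 1)) = ε * ((s + t) / (s + t + 1)) := by ring
      _ ≤ ε * 1 := mul_le_mul_of_nonneg_left hq hε.le
      _ = ε := mul_one ε
  linarith

lemma align (hN : IsAbsoluteNorm N) (he : ∀ x : X, ‖x‖ = N ‖(e x).1‖ ‖(e x).2‖)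
    (x : X) (f : X →L[ℝ] ℝ) (hx : ‖x‖ = 1) (hf : ‖f‖ = 1) (hfx : f x = 1) :
    (f.comp (Iw e)) (Pw e x) = ‖f.comp (Iw e)‖ * ‖Pw e x‖ ∧
    (f.comp (Iz e)) (Pz e x) = ‖f.comp (Iz e)‖ * ‖Pz e x‖ ∧
    ‖f.comp (Iw e)‖ * ‖Pw e x‖ + ‖f.comp (Iz e)‖ * ‖Pz e x‖ = 1 := by
  have hd := fdecomp e f x
  rw [hfx] at hd
  have h1 : (f.comp (Iw e)) (Pw e x) ≤ ‖f.comp (Iw e)‖ * ‖Pw e x‖ :=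
    le_trans (le_abs_self _) ((f.comp (Iw e)).le_opNorm _)
  have h2 : (f.comp (Iz e)) (Pz e x) ≤ ‖f.comp (Iz e)‖ * ‖Pz e x‖ :=
    le_trans (le_abs_self _) ((f.comp (Iz e)).le_opNorm _)
  have h3 : ‖f.comp (Iw e)‖ * ‖Pw e x‖ + ‖f.comp (Iz e)‖ * ‖Pz e x‖ ≤ 1 := by
    have hstar := star_ineq e hN he f (norm_nonneg (Pw e x)) (norm_nonneg (Pz e x))
    rw [hf, one_mul] at hstar
    have hNx : N ‖Pw e x‖ ‖Pz e x‖ = 1 := by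
      rw [Pw_apply, Pz_apply, ← he x, hx]
    calc ‖f.comp (Iw e)‖ * ‖Pw e x‖ + ‖f.comp (Iz e)‖ * ‖Pz e x‖
        = ‖Pw e x‖ * ‖f.comp (Iw e)‖ + ‖Pz e x‖ * ‖f.comp (Iz e)‖ := by ring
      _ ≤ N ‖Pw e x‖ ‖Pz e x‖ := hstar
      _ = 1 := hNx
  refine ⟨by linarith, by linarith, by linarith⟩


end Setup

section MainAux
variable {W Z X : Type*} [NormedAddCommGroup W] [NormedSpace ℝ W]
  [NormedAddCommGroup Z] [NormedSpace ℝ Z]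
  [NormedAddCommGroup X] [NormedSpace ℝ X]
  (e : X ≃L[ℝ] W × Z)
  {N : ℝ → ℝ → ℝ}

lemma pureW_pair (hN : IsAbsoluteNorm N) (he : ∀ x : X, ‖x‖ = N ‖(e x).1‖ ‖(e x).2‖)
    (w : W) (f : W →L[ℝ] ℝ) (hw : ‖w‖ = 1) (hf : ‖f‖ = 1) (hfw : f w = 1) :
    ‖Iw e w‖ = 1 ∧ ‖f.comp (Pw e)‖ = 1 ∧ (f.comp (Pw e)) (Iw e w) = 1 := by
  have h1 : ‖Iw e w‖ = 1 := by rw [norm_Iw e hN he, hw]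
  have h3 : (f.comp (Pw e)) (Iw e w) = 1 := by simp [hfw]
  refine ⟨h1, le_antisymm ?_ ?_, h3⟩
  · refine ContinuousLinearMap.opNorm_le_bound _ one_pos.le fun y => ?_
    rw [one_mul]
    calc ‖(f.comp (Pw e)) y‖ ≤ ‖f‖ * ‖Pw e y‖ := f.le_opNorm _
      _ = ‖Pw e y‖ := by rw [hf, one_mul]
      _ ≤ ‖y‖ := norm_Pw_le e hN he y
  · have : (1:ℝ) = ‖(f.comp (Pw e)) (Iw e w)‖ := by rw [h3]; simp
    calc (1:ℝ) = ‖(f.comp (Pw e)) (Iw e w)‖ := this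
      _ ≤ ‖f.comp (Pw e)‖ * ‖Iw e w‖ := (f.comp (Pw e)).le_opNorm _
      _ = ‖f.comp (Pw e)‖ := by rw [h1, mul_one]

lemma numRadius_tilde (hN : IsAbsoluteNorm N) (he : ∀ x : X, ‖x‖ = N ‖(e x).1‖ ‖(e x).2‖)
    (T : W →L[ℝ] W) (hvT : NumRadius T = 1)
    (w : W) (f : W →L[ℝ] ℝ) (hw : ‖w‖ = 1) (hf : ‖f‖ = 1) (hfw : f w = 1) :
    NumRadius ((Iw e).comp (T.comp (Pw e))) = 1 := by
  set Tt := (Iw e).comp (T.comp (Pw e)) with hTt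
  have hle : NumRadius Tt ≤ 1 := by
    refine numRadius_le zero_le_one fun y g hy hg hgy => ?_
    obtain ⟨al1, al2, al3⟩ := align e hN he y g hy hg hgy
    set p := Pw e y with hp
    set g1 := g.comp (Iw e) with hg1
    have hval : g (Tt y) = g1 (T p) := by
      rw [hTt]
      simp only [ContinuousLinearMap.comp_apply]
      rfl
    rw [hval]
    rcases eq_or_lt_of_le (norm_nonneg p) with hp0 | hp0
    · have : p = 0 := by rw [← norm_eq_zero]; exact hp0.symm
      simp [this]
    rcases eq_or_lt_of_le (norm_nonneg g1) with hg0 | hg0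
    · have : g1 = 0 := by rw [← norm_eq_zero]; exact hg0.symm
      simp [this]
    have hxp : ‖(‖p‖⁻¹ • p)‖ = 1 := by
      rw [norm_smul, Real.norm_eq_abs, abs_of_nonneg (inv_nonneg.mpr (norm_nonneg p)),
        inv_mul_cancel₀ hp0.ne']
    have hfp : ‖(‖g1‖⁻¹ • g1)‖ = 1 := by
      rw [norm_smul (‖g1‖⁻¹) g1, Real.norm_eq_abs,
        abs_of_nonneg (inv_nonneg.mpr (norm_nonneg g1)), inv_mul_cancel₀ hg0.ne']
    have hpair : (‖g1‖⁻¹ • g1) (‖p‖⁻¹ • p) = 1 := by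
      simp only [ContinuousLinearMap.smul_apply, map_smul, smul_eq_mul]
      rw [al1]
      field_simp
    have hv := le_numRadius (T := T) hxp hfp hpair
    rw [hvT] at hv
    have hexp : (‖g1‖⁻¹ • g1) (T (‖p‖⁻¹ • p)) = ‖g1‖⁻¹ * (‖p‖⁻¹ * g1 (T p)) := by
      simp only [ContinuousLinearMap.smul_apply, map_smul, smul_eq_mul]
      ring
    rw [hexp, abs_mul, abs_mul, abs_of_nonneg (inv_nonneg.mpr (norm_nonneg g1)),
      abs_of_nonneg (inv_nonneg.mpr (norm_nonneg p))] at hv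
    have hprod : ‖g1‖ * ‖p‖ ≤ 1 := by
      nlinarith [mul_nonneg (norm_nonneg (g.comp (Iz e))) (norm_nonneg (Pz e y))]
    calc |g1 (T p)| = ‖g1‖ * ‖p‖ * (‖g1‖⁻¹ * (‖p‖⁻¹ * |g1 (T p)|)) := by
          field_simp
        _ ≤ ‖g1‖ * ‖p‖ * 1 := by
          refine mul_le_mul_of_nonneg_left hv ?_
          positivity
        _ = ‖g1‖ * ‖p‖ := mul_one _
        _ ≤ 1 := hprod
  have hge : NumRadius T ≤ NumRadius Tt := by
    refine Real.sSup_le ?_ ?_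
    · rintro r ⟨x, f', hx, hf', hfx', rfl⟩
      obtain ⟨h1, h2, h3⟩ := pureW_pair e hN he x f' hx hf' hfx'
      have hval : (f'.comp (Pw e)) (Tt (Iw e x)) = f' (T x) := by
        rw [hTt]
        simp only [ContinuousLinearMap.comp_apply, Pw_Iw]
      calc |f' (T x)| = |(f'.comp (Pw e)) (Tt (Iw e x))| := by rw [hval]
        _ ≤ NumRadius Tt := le_numRadius h1 h2 h3
    · obtain ⟨h1, h2, h3⟩ := pureW_pair e hN he w f hw hf hfw
      exact le_trans (abs_nonneg _) (le_numRadius (T := Tt) h1 h2 h3)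
  rw [hvT] at hge
  linarith

end MainAux


theorem bpbnu_absolute_summand (W Z X : Type*)
    [NormedAddCommGroup W] [NormedSpace ℝ W] [CompleteSpace W]
    [NormedAddCommGroup Z] [NormedSpace ℝ Z] [CompleteSpace Z]
    [NormedAddCommGroup X] [NormedSpace ℝ X] [CompleteSpace X]
    (N : ℝ → ℝ → ℝ) (hN : IsAbsoluteNorm N)
    (e : X ≃L[ℝ] W × Z) (he : ∀ x : X, ‖x‖ = N ‖(e x).1‖ ‖(e x).2‖)
    (htype : AbsNormTypeOne N ∨ AbsNormTypeInfty N)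
    (h : HasBPBnu X) : HasBPBnu W := by
  intro ε hε
  rcases htype with ⟨K, hK0, hKle⟩ | ⟨b₀, hb₀0, hNb₀⟩
  · -- Type 1 case
    have hK1 : K ≤ 1 := by
      have h01 := hKle 0 1
      rw [hN.zero_one] at h01
      simpa using h01
    set ε' := min (ε / 3) (K / 2) with hε'def
    have hε'pos : 0 < ε' := lt_min (by linarith) (by linarith)
    obtain ⟨η, hη, hbpb⟩ := h ε' hε'pos
    refine ⟨η, hη, ?_⟩
    intro T w f hvT hw hf hfw hval
    obtain ⟨hIwn, hfPn, hfPI⟩ := pureW_pair e hN he w f hw hf hfw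
    have hvTt := numRadius_tilde e hN he T hvT w f hw hf hfw
    have hvalX : 1 - η < |(f.comp (Pw e)) (((Iw e).comp (T.comp (Pw e))) (Iw e w))| := by
      have hrw : (f.comp (Pw e)) (((Iw e).comp (T.comp (Pw e))) (Iw e w)) = f (T w) := by
        simp only [ContinuousLinearMap.comp_apply, Pw_Iw]
      rw [hrw]; exact hval
    obtain ⟨S, x₀, f₀, hvS, hx₀, hf₀, hfx₀, hatt, hfcl, hxcl, hScl⟩ :=
      hbpb _ _ _ hvTt hIwn hfPn hfPI hvalX
    obtain ⟨al1, al2, al3⟩ := align e hN he x₀ f₀ hx₀ hf₀ hfx₀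
    -- component closeness
    have hwcl : ‖Pw e x₀ - w‖ < ε' := by
      have hrw : Pw e x₀ - w = Pw e (x₀ - Iw e w) := by
        rw [map_sub, Pw_Iw]
      rw [hrw]
      exact lt_of_le_of_lt (norm_Pw_le e hN he _) hxcl
    have hg1cl : ‖f₀.comp (Iw e) - f‖ < ε' := by
      have hrw : f₀.comp (Iw e) - f = (f₀ - f.comp (Pw e)).comp (Iw e) := by
        ext u
        simp only [ContinuousLinearMap.sub_apply, ContinuousLinearMap.comp_apply, Pw_Iw]
      rw [hrw]
      exact lt_of_le_of_lt (norm_comp_Iw_le e hN he _) hfcl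
    have hg2small : ‖f₀.comp (Iz e)‖ < ε' := by
      have hrw : f₀.comp (Iz e) = (f₀ - f.comp (Pw e)).comp (Iz e) := by
        ext v
        simp only [ContinuousLinearMap.sub_apply, ContinuousLinearMap.comp_apply, Pw_Iz,
          map_zero, sub_zero]
      rw [hrw]
      exact lt_of_le_of_lt (norm_comp_Iz_le e hN he _) hfcl
    have hg2K : ‖f₀.comp (Iz e)‖ < K :=
      lt_of_lt_of_le hg2small (le_trans (min_le_right _ _) (by linarith))
    have hg1le1 : ‖f₀.comp (Iw e)‖ ≤ 1 := le_trans (norm_comp_Iw_le e hN he f₀) hf₀.le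
    -- the z-part of the point vanishes exactly
    have hz₀ : Pz e x₀ = 0 := by
      by_contra hne
      obtain ⟨g, hg, hgz⟩ := exists_dual_vector ℝ (Pz e x₀) (norm_ne_zero_iff.mpr hne)
      have hgz' : g (Pz e x₀) = ‖Pz e x₀‖ := by exact_mod_cast hgz
      obtain ⟨G, hG⟩ : ∃ a' : X →L[ℝ] ℝ,
          a' = (f₀.comp (Iw e)).comp (Pw e) + K • (g.comp (Pz e)) := ⟨_, rfl⟩
      have hGle : ‖G‖ ≤ 1 := by
        refine ContinuousLinearMap.opNorm_le_bound _ one_pos.le fun y => ?_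
        rw [one_mul]
        have e1 : G y = (f₀.comp (Iw e)) (Pw e y) + K * g (Pz e y) := by
          simp only [hG, ContinuousLinearMap.add_apply, ContinuousLinearMap.comp_apply,
            ContinuousLinearMap.smul_apply, smul_eq_mul]
        have b1 : |(f₀.comp (Iw e)) (Pw e y)| ≤ ‖Pw e y‖ := by
          calc |(f₀.comp (Iw e)) (Pw e y)| ≤ ‖f₀.comp (Iw e)‖ * ‖Pw e y‖ :=
                (f₀.comp (Iw e)).le_opNorm _
            _ ≤ 1 * ‖Pw e y‖ := mul_le_mul_of_nonneg_right hg1le1 (norm_nonneg _)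
            _ = ‖Pw e y‖ := one_mul _
        have b2 : |g (Pz e y)| ≤ ‖Pz e y‖ := by
          calc |g (Pz e y)| ≤ ‖g‖ * ‖Pz e y‖ := g.le_opNorm _
            _ = ‖Pz e y‖ := by rw [hg, one_mul]
        have b3 := hKle ‖Pw e y‖ ‖Pz e y‖
        rw [abs_of_nonneg (norm_nonneg _), abs_of_nonneg (norm_nonneg _)] at b3
        have b4 : N ‖Pw e y‖ ‖Pz e y‖ = ‖y‖ := by
          rw [Pw_apply, Pz_apply, ← he y]
        calc ‖G y‖ = |(f₀.comp (Iw e)) (Pw e y) + K * g (Pz e y)| := by rw [e1]; rfl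
          _ ≤ |(f₀.comp (Iw e)) (Pw e y)| + |K * g (Pz e y)| := abs_add_le _ _
          _ = |(f₀.comp (Iw e)) (Pw e y)| + K * |g (Pz e y)| := by
              rw [abs_mul, abs_of_nonneg hK0.le]
          _ ≤ ‖Pw e y‖ + K * ‖Pz e y‖ :=
              add_le_add b1 (mul_le_mul_of_nonneg_left b2 hK0.le)
          _ ≤ N ‖Pw e y‖ ‖Pz e y‖ := b3
          _ = ‖y‖ := b4
      have hGx : G x₀ = (f₀.comp (Iw e)) (Pw e x₀) + K * ‖Pz e x₀‖ := by
        simp only [hG, ContinuousLinearMap.add_apply, ContinuousLinearMap.comp_apply,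
          ContinuousLinearMap.smul_apply, smul_eq_mul, hgz']
      have hGb : G x₀ ≤ 1 := by
        calc G x₀ ≤ |G x₀| := le_abs_self _
          _ ≤ ‖G‖ * ‖x₀‖ := G.le_opNorm x₀
          _ ≤ 1 := by rw [hx₀, mul_one]; exact hGle
      have hzpos : 0 < ‖Pz e x₀‖ := norm_pos_iff.mpr hne
      nlinarith [mul_pos (sub_pos.mpr hg2K) hzpos,
        mul_le_mul_of_nonneg_right hg2K.le (norm_nonneg (Pz e x₀))]
    -- consequences
    have hx₀w : ‖Pw e x₀‖ = 1 := by
      have h2 : ‖(e x₀).2‖ = 0 := by rw [← Pz_apply e x₀, hz₀, norm_zero]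
      have hrw : ‖x₀‖ = ‖Pw e x₀‖ := by
        rw [he x₀, h2, hN.s_zero, ← Pw_apply e x₀, abs_of_nonneg (norm_nonneg _)]
      rw [← hrw]; exact hx₀
    have hg1n : ‖f₀.comp (Iw e)‖ = 1 := by
      rw [hx₀w, hz₀, norm_zero, mul_zero, add_zero, mul_one] at al3
      exact al3
    have hg1w₀ : (f₀.comp (Iw e)) (Pw e x₀) = 1 := by
      rw [al1, hx₀w, hg1n, mul_one]
    have hx₀eq : Iw e (Pw e x₀) = x₀ := by
      have hd := decomp e x₀
      rw [hz₀, map_zero, add_zero] at hd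
      exact hd
    -- the operator on W
    obtain ⟨A, hA⟩ : ∃ a' : W →L[ℝ] W, a' = (Pw e).comp (S.comp (Iw e)) +
      ((f₀.comp (Iz e)).comp ((Pz e).comp (S.comp (Iw e)))).smulRight (Pw e x₀) := ⟨_, rfl⟩
    have hAu : ∀ u : W,
        A u = Pw e (S (Iw e u)) + (f₀.comp (Iz e)) (Pz e (S (Iw e u))) • Pw e x₀ := fun u => by
      simp only [hA, ContinuousLinearMap.add_apply, ContinuousLinearMap.comp_apply,
        ContinuousLinearMap.smulRight_apply]
    have hbound : ∀ (u : W) (u' : W →L[ℝ] ℝ), ‖u‖ = 1 → ‖u'‖ = 1 → u' u = 1 →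
        |u' (A u)| ≤ 1 := by
      intro u u' hu hu' huu
      obtain ⟨g, hg⟩ : ∃ a' : X →L[ℝ] ℝ, a' = u'.comp (Pw e) +
        (u' (Pw e x₀)) • ((f₀.comp (Iz e)).comp (Pz e)) := ⟨_, rfl⟩
      have hcoef : |u' (Pw e x₀)| ≤ 1 := by
        calc |u' (Pw e x₀)| ≤ ‖u'‖ * ‖Pw e x₀‖ := u'.le_opNorm _
          _ = 1 := by rw [hu', hx₀w, mul_one]
      have hIun : ‖Iw e u‖ = 1 := by rw [norm_Iw e hN he, hu]
      have hgIu : g (Iw e u) = 1 := by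
        simp only [hg, ContinuousLinearMap.add_apply, ContinuousLinearMap.comp_apply,
          ContinuousLinearMap.smul_apply, Pw_Iw, Pz_Iw, map_zero, smul_eq_mul, mul_zero,
          add_zero, huu]
      have hgle : ‖g‖ ≤ 1 := by
        refine ContinuousLinearMap.opNorm_le_bound _ one_pos.le fun y => ?_
        rw [one_mul]
        have e1 : g y = u' (Pw e y) + u' (Pw e x₀) * (f₀.comp (Iz e)) (Pz e y) := by
          simp only [hg, ContinuousLinearMap.add_apply, ContinuousLinearMap.comp_apply,
            ContinuousLinearMap.smul_apply, smul_eq_mul]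
        have b1 : |u' (Pw e y)| ≤ ‖Pw e y‖ := by
          calc |u' (Pw e y)| ≤ ‖u'‖ * ‖Pw e y‖ := u'.le_opNorm _
            _ = ‖Pw e y‖ := by rw [hu', one_mul]
        have b2 : |(f₀.comp (Iz e)) (Pz e y)| ≤ K * ‖Pz e y‖ := by
          calc |(f₀.comp (Iz e)) (Pz e y)| ≤ ‖f₀.comp (Iz e)‖ * ‖Pz e y‖ :=
              (f₀.comp (Iz e)).le_opNorm _
            _ ≤ K * ‖Pz e y‖ := mul_le_mul_of_nonneg_right hg2K.le (norm_nonneg _)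
        have b3 := hKle ‖Pw e y‖ ‖Pz e y‖
        rw [abs_of_nonneg (norm_nonneg _), abs_of_nonneg (norm_nonneg _)] at b3
        have b4 : N ‖Pw e y‖ ‖Pz e y‖ = ‖y‖ := by rw [Pw_apply, Pz_apply, ← he y]
        calc ‖g y‖ = |u' (Pw e y) + u' (Pw e x₀) * (f₀.comp (Iz e)) (Pz e y)| := by
              rw [e1]; rfl
          _ ≤ |u' (Pw e y)| + |u' (Pw e x₀) * (f₀.comp (Iz e)) (Pz e y)| := abs_add_le _ _
          _ = |u' (Pw e y)| + |u' (Pw e x₀)| * |(f₀.comp (Iz e)) (Pz e y)| := by rw [abs_mul]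
          _ ≤ ‖Pw e y‖ + 1 * (K * ‖Pz e y‖) := by
              refine add_le_add b1 ?_
              exact mul_le_mul hcoef b2 (abs_nonneg _) one_pos.le
          _ = ‖Pw e y‖ + K * ‖Pz e y‖ := by rw [one_mul]
          _ ≤ N ‖Pw e y‖ ‖Pz e y‖ := b3
          _ = ‖y‖ := b4
      have hgn : ‖g‖ = 1 := by
        refine le_antisymm hgle ?_
        calc (1:ℝ) = ‖g (Iw e u)‖ := by rw [hgIu]; simp
          _ ≤ ‖g‖ * ‖Iw e u‖ := g.le_opNorm _
          _ = ‖g‖ := by rw [hIun, mul_one]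
      have hvalg : u' (A u) = g (S (Iw e u)) := by
        rw [hAu]
        simp only [hg, ContinuousLinearMap.add_apply, ContinuousLinearMap.comp_apply,
          ContinuousLinearMap.smul_apply, smul_eq_mul, map_add, map_smul]
        ring
      rw [hvalg, ← hvS]
      exact le_numRadius hIun hgn hgIu
    have hattW : |(f₀.comp (Iw e)) (A (Pw e x₀))| = 1 := by
      have hrw : (f₀.comp (Iw e)) (A (Pw e x₀)) = f₀ (S x₀) := by
        rw [hAu, hx₀eq, map_add, map_smul, hg1w₀, smul_eq_mul, mul_one]
        rw [fdecomp e f₀ (S x₀)]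
      rw [hrw]; exact hatt
    have hvA : NumRadius A = 1 := by
      refine le_antisymm (numRadius_le zero_le_one hbound) ?_
      calc (1:ℝ) = |(f₀.comp (Iw e)) (A (Pw e x₀))| := hattW.symm
        _ ≤ NumRadius A := le_numRadius hx₀w hg1n hg1w₀
    -- distance of operators
    have hAT : ‖A - T‖ < ε := by
      obtain ⟨D, hD⟩ : ∃ a' : X →L[ℝ] X, a' = S - (Iw e).comp (T.comp (Pw e)) := ⟨_, rfl⟩
      have hkey : ∀ u : W, (A - T) u =
          Pw e (D (Iw e u)) + (f₀.comp (Iz e)) (Pz e (D (Iw e u))) • Pw e x₀ := by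
        intro u
        have h1 : Pw e (D (Iw e u)) = Pw e (S (Iw e u)) - T u := by
          simp only [hD, ContinuousLinearMap.sub_apply, map_sub,
            ContinuousLinearMap.comp_apply, Pw_Iw]
        have h2 : Pz e (D (Iw e u)) = Pz e (S (Iw e u)) := by
          simp only [hD, ContinuousLinearMap.sub_apply, map_sub,
            ContinuousLinearMap.comp_apply, Pz_Iw, sub_zero]
        rw [ContinuousLinearMap.sub_apply, hAu, h1, h2]
        abel
      have hg2half : ‖f₀.comp (Iz e)‖ ≤ 1 := by
        have : ε' ≤ K / 2 := min_le_right _ _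
        linarith [hg2small]
      have hDn : ‖D‖ < ε' := by rw [hD]; exact hScl
      refine lt_of_le_of_lt (ContinuousLinearMap.opNorm_le_bound _
        (by positivity : (0:ℝ) ≤ 2 * ‖D‖) fun u => ?_) ?_
      · rw [hkey]
        have hDu : ‖D (Iw e u)‖ ≤ ‖D‖ * ‖u‖ := by
          calc ‖D (Iw e u)‖ ≤ ‖D‖ * ‖Iw e u‖ := D.le_opNorm _
            _ = ‖D‖ * ‖u‖ := by rw [norm_Iw e hN he]
        calc ‖Pw e (D (Iw e u)) + (f₀.comp (Iz e)) (Pz e (D (Iw e u))) • Pw e x₀‖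
            ≤ ‖Pw e (D (Iw e u))‖ + ‖(f₀.comp (Iz e)) (Pz e (D (Iw e u))) • Pw e x₀‖ :=
              norm_add_le _ _
          _ ≤ ‖D (Iw e u)‖ + |(f₀.comp (Iz e)) (Pz e (D (Iw e u)))| * ‖Pw e x₀‖ := by
              refine add_le_add (norm_Pw_le e hN he _) ?_
              rw [norm_smul]; rfl
          _ ≤ ‖D (Iw e u)‖ + (‖f₀.comp (Iz e)‖ * ‖Pz e (D (Iw e u))‖) * 1 := by
              refine add_le_add le_rfl ?_
              rw [hx₀w]
              exact mul_le_mul_of_nonneg_right ((f₀.comp (Iz e)).le_opNorm _) (by norm_num)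
          _ ≤ ‖D (Iw e u)‖ + 1 * ‖D (Iw e u)‖ := by
              rw [mul_one]
              refine add_le_add le_rfl ?_
              calc ‖f₀.comp (Iz e)‖ * ‖Pz e (D (Iw e u))‖ ≤ 1 * ‖D (Iw e u)‖ :=
                mul_le_mul hg2half (norm_Pz_le e hN he _) (norm_nonneg _) one_pos.le
                _ = 1 * ‖D (Iw e u)‖ := rfl
          _ = 2 * ‖D (Iw e u)‖ := by ring
          _ ≤ 2 * (‖D‖ * ‖u‖) := by linarith [hDu]
          _ = 2 * ‖D‖ * ‖u‖ := by ring
      · have : ε' ≤ ε / 3 := min_le_left _ _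
        linarith
    refine ⟨A, Pw e x₀, f₀.comp (Iw e), hvA, hx₀w, hg1n, hg1w₀, hattW, ?_, ?_, hAT⟩
    · have : ε' ≤ ε / 3 := min_le_left _ _
      linarith
    · have : ε' ≤ ε / 3 := min_le_left _ _
      linarith
  · -- Type ∞ case
    set ε' := min (ε / 2) (b₀ / 2) with hε'def
    have hε'pos : 0 < ε' := lt_min (by linarith) (by linarith)
    obtain ⟨η, hη, hbpb⟩ := h ε' hε'pos
    refine ⟨η, hη, ?_⟩
    intro T w f hvT hw hf hfw hval
    obtain ⟨hIwn, hfPn, hfPI⟩ := pureW_pair e hN he w f hw hf hfw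
    have hvTt := numRadius_tilde e hN he T hvT w f hw hf hfw
    have hvalX : 1 - η < |(f.comp (Pw e)) (((Iw e).comp (T.comp (Pw e))) (Iw e w))| := by
      have hrw : (f.comp (Pw e)) (((Iw e).comp (T.comp (Pw e))) (Iw e w)) = f (T w) := by
        simp only [ContinuousLinearMap.comp_apply, Pw_Iw]
      rw [hrw]; exact hval
    obtain ⟨S, x₀, f₀, hvS, hx₀, hf₀, hfx₀, hatt, hfcl, hxcl, hScl⟩ :=
      hbpb _ _ _ hvTt hIwn hfPn hfPI hvalX
    obtain ⟨al1, al2, al3⟩ := align e hN he x₀ f₀ hx₀ hf₀ hfx₀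
    have hwcl : ‖Pw e x₀ - w‖ < ε' := by
      have hrw : Pw e x₀ - w = Pw e (x₀ - Iw e w) := by rw [map_sub, Pw_Iw]
      rw [hrw]
      exact lt_of_le_of_lt (norm_Pw_le e hN he _) hxcl
    have hg1cl : ‖f₀.comp (Iw e) - f‖ < ε' := by
      have hrw : f₀.comp (Iw e) - f = (f₀ - f.comp (Pw e)).comp (Iw e) := by
        ext u
        simp only [ContinuousLinearMap.sub_apply, ContinuousLinearMap.comp_apply, Pw_Iw]
      rw [hrw]
      exact lt_of_le_of_lt (norm_comp_Iw_le e hN he _) hfcl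
    have hzcl : ‖Pz e x₀‖ < ε' := by
      have hrw : Pz e x₀ = Pz e (x₀ - Iw e w) := by
        rw [map_sub, Pz_Iw, sub_zero]
      rw [hrw]
      exact lt_of_le_of_lt (norm_Pz_le e hN he _) hxcl
    have hzb : ‖Pz e x₀‖ ≤ b₀ / 2 := le_trans hzcl.le (min_le_right _ _)
    have hN1 : ∀ t : ℝ, 0 ≤ t → t ≤ b₀ → N 1 t = 1 := by
      intro t h0 h1
      have hle := hN.mono_right (s := 1) h0 h1
      rw [hNb₀] at hle
      have hge := hN.mono_right (s := 1) (t := 0) le_rfl h0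
      rw [hN.s_zero] at hge
      simp only [abs_one] at hge
      linarith
    have hw₀le : ‖Pw e x₀‖ ≤ 1 := by
      rw [← hx₀]; exact norm_Pw_le e hN he x₀
    -- the z-part of the functional vanishes exactly
    have hg2z : f₀.comp (Iz e) = 0 := by
      have hkey : ∀ δ : ℝ, 0 < δ →
          (b₀ - ‖Pz e x₀‖) * ‖f₀.comp (Iz e)‖ ≤ b₀ * δ := by
        intro δ hδ
        obtain ⟨q, hq1, hq2⟩ := almost_norming (f₀.comp (Iz e)) hδ
        obtain ⟨y, hy⟩ : ∃ a' : X, a' = e.symm (Pw e x₀, b₀ • q) := ⟨_, rfl⟩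
        have hyn : ‖y‖ ≤ 1 := by
          rw [hy, norm_esymm e he]
          calc N ‖Pw e x₀‖ ‖b₀ • q‖ ≤ N 1 b₀ := by
                refine hN.mono (norm_nonneg _) hw₀le (norm_nonneg _) ?_
                rw [norm_smul, Real.norm_eq_abs, abs_of_nonneg hb₀0.le]
                nlinarith
            _ = 1 := hNb₀
        have hfy : f₀ y = (f₀.comp (Iw e)) (Pw e x₀) + b₀ * (f₀.comp (Iz e)) q := by
          rw [hy, esymm_eq, map_add]
          have h2 : f₀ (Iz e (b₀ • q)) = b₀ * (f₀.comp (Iz e)) q := by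
            rw [map_smul, map_smul, smul_eq_mul]
            simp only [ContinuousLinearMap.comp_apply]
          rw [h2]
          rfl
        have hub : f₀ y ≤ 1 := by
          calc f₀ y ≤ |f₀ y| := le_abs_self _
            _ ≤ ‖f₀‖ * ‖y‖ := f₀.le_opNorm _
            _ ≤ 1 := by rw [hf₀, one_mul]; exact hyn
        nlinarith [hq2, hb₀0.le, norm_nonneg (Pz e x₀)]
      have hg2n : ‖f₀.comp (Iz e)‖ ≤ 0 := by
        by_contra hpos
        push_neg at hpos
        have hbb : 0 < b₀ - ‖Pz e x₀‖ := by linarith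
        have hthis := hkey ((b₀ - ‖Pz e x₀‖) * ‖f₀.comp (Iz e)‖ / (2 * b₀)) (by positivity)
        have hc : 0 < (b₀ - ‖Pz e x₀‖) * ‖f₀.comp (Iz e)‖ := mul_pos hbb hpos
        have heq : b₀ * ((b₀ - ‖Pz e x₀‖) * ‖f₀.comp (Iz e)‖ / (2 * b₀)) =
            (b₀ - ‖Pz e x₀‖) * ‖f₀.comp (Iz e)‖ / 2 := by
          field_simp
        rw [heq] at hthis
        linarith
      exact norm_le_zero_iff.mp hg2n
    have hsum : ‖f₀.comp (Iw e)‖ * ‖Pw e x₀‖ = 1 := by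
      rw [hg2z, norm_zero, zero_mul, add_zero] at al3
      exact al3
    have hg1le : ‖f₀.comp (Iw e)‖ ≤ 1 := le_trans (norm_comp_Iw_le e hN he f₀) hf₀.le
    have hw₀n : ‖Pw e x₀‖ = 1 := by
      nlinarith [norm_nonneg (Pw e x₀), norm_nonneg (f₀.comp (Iw e)), hw₀le]
    have hg1n : ‖f₀.comp (Iw e)‖ = 1 := by nlinarith [hsum, hw₀n]
    have hg1w₀ : (f₀.comp (Iw e)) (Pw e x₀) = 1 := by
      rw [al1, hw₀n, hg1n, mul_one]
    have hf₀y : ∀ y : X, f₀ y = (f₀.comp (Iw e)) (Pw e y) := by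
      intro y
      rw [fdecomp e f₀ y, hg2z]
      simp
    -- the embedding J
    obtain ⟨J, hJ⟩ : ∃ a' : W →L[ℝ] X,
        a' = Iw e + (f₀.comp (Iw e)).smulRight (Iz e (Pz e x₀)) := ⟨_, rfl⟩
    have hJu : ∀ u : W, J u = e.symm (u, (f₀.comp (Iw e)) u • Pz e x₀) := by
      intro u
      rw [esymm_eq]
      simp only [hJ, ContinuousLinearMap.add_apply, ContinuousLinearMap.smulRight_apply,
        map_smul]
    have hPwJ : ∀ u : W, Pw e (J u) = u := by
      intro u
      simp only [hJ, ContinuousLinearMap.add_apply, ContinuousLinearMap.smulRight_apply,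
        map_add, map_smul, Pw_Iw, Pw_Iz, smul_zero, add_zero]
    have hJle : ∀ u : W, ‖J u‖ ≤ ‖u‖ := by
      intro u
      rw [hJu, norm_esymm e he]
      have hcoef : |(f₀.comp (Iw e)) u| ≤ ‖u‖ := by
        calc |(f₀.comp (Iw e)) u| ≤ ‖f₀.comp (Iw e)‖ * ‖u‖ := (f₀.comp (Iw e)).le_opNorm _
          _ ≤ 1 * ‖u‖ := mul_le_mul_of_nonneg_right hg1le (norm_nonneg _)
          _ = ‖u‖ := one_mul _
      calc N ‖u‖ ‖(f₀.comp (Iw e)) u • Pz e x₀‖ ≤ N ‖u‖ (‖u‖ * ‖Pz e x₀‖) := by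
            refine hN.mono_right (norm_nonneg _) ?_
            rw [norm_smul, Real.norm_eq_abs]
            exact mul_le_mul_of_nonneg_right hcoef (norm_nonneg _)
        _ = ‖u‖ * N 1 ‖Pz e x₀‖ := by
            have := hN.smul ‖u‖ 1 ‖Pz e x₀‖
            rw [mul_one, abs_of_nonneg (norm_nonneg u)] at this
            exact this
        _ = ‖u‖ := by
            rw [hN1 ‖Pz e x₀‖ (norm_nonneg _) (by linarith), mul_one]
    have hJn1 : ∀ u : W, ‖u‖ = 1 → ‖J u‖ = 1 := by
      intro u hu
      rw [hJu, norm_esymm e he, hu]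
      refine hN1 _ (norm_nonneg _) ?_
      rw [norm_smul, Real.norm_eq_abs]
      have hcoef : |(f₀.comp (Iw e)) u| ≤ 1 := by
        calc |(f₀.comp (Iw e)) u| ≤ ‖f₀.comp (Iw e)‖ * ‖u‖ := (f₀.comp (Iw e)).le_opNorm _
          _ = 1 := by rw [hg1n, hu, mul_one]
      nlinarith [norm_nonneg (Pz e x₀), abs_nonneg ((f₀.comp (Iw e)) u)]
    obtain ⟨A, hA⟩ : ∃ a' : W →L[ℝ] W, a' = (Pw e).comp (S.comp J) := ⟨_, rfl⟩
    have hAu : ∀ u : W, A u = Pw e (S (J u)) := fun u => by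
      simp only [hA, ContinuousLinearMap.comp_apply]
    have hbound : ∀ (u : W) (u' : W →L[ℝ] ℝ), ‖u‖ = 1 → ‖u'‖ = 1 → u' u = 1 →
        |u' (A u)| ≤ 1 := by
      intro u u' hu hu' huu
      obtain ⟨-, hgn, -⟩ := pureW_pair e hN he u u' hu hu' huu
      have hgJu : (u'.comp (Pw e)) (J u) = 1 := by
        simp only [ContinuousLinearMap.comp_apply, hPwJ, huu]
      have hvalg : u' (A u) = (u'.comp (Pw e)) (S (J u)) := by
        rw [hAu]; rfl
      rw [hvalg, ← hvS]
      exact le_numRadius (hJn1 u hu) hgn hgJu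
    have hJw₀ : J (Pw e x₀) = x₀ := by
      rw [hJu, hg1w₀, one_smul]
      calc e.symm (Pw e x₀, Pz e x₀) = e.symm (e x₀) := by rfl
        _ = x₀ := e.symm_apply_apply x₀
    have hattW : |(f₀.comp (Iw e)) (A (Pw e x₀))| = 1 := by
      have hrw : (f₀.comp (Iw e)) (A (Pw e x₀)) = f₀ (S x₀) := by
        rw [hAu, hJw₀, ← hf₀y]
      rw [hrw]; exact hatt
    have hvA : NumRadius A = 1 := by
      refine le_antisymm (numRadius_le zero_le_one hbound) ?_
      calc (1:ℝ) = |(f₀.comp (Iw e)) (A (Pw e x₀))| := hattW.symm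
        _ ≤ NumRadius A := le_numRadius hw₀n hg1n hg1w₀
    have hAT : ‖A - T‖ < ε := by
      obtain ⟨D, hD⟩ : ∃ a' : X →L[ℝ] X, a' = S - (Iw e).comp (T.comp (Pw e)) := ⟨_, rfl⟩
      have hkey : ∀ u : W, (A - T) u = Pw e (D (J u)) := by
        intro u
        have h1 : D (J u) = S (J u) - Iw e (T u) := by
          simp only [hD, ContinuousLinearMap.sub_apply, ContinuousLinearMap.comp_apply, hPwJ]
        rw [ContinuousLinearMap.sub_apply, hAu, h1, map_sub, Pw_Iw]
      have hDn : ‖D‖ < ε' := by rw [hD]; exact hScl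
      refine lt_of_le_of_lt (ContinuousLinearMap.opNorm_le_bound _ (norm_nonneg D)
        fun u => ?_) ?_
      · rw [hkey]
        calc ‖Pw e (D (J u))‖ ≤ ‖D (J u)‖ := norm_Pw_le e hN he _
          _ ≤ ‖D‖ * ‖J u‖ := D.le_opNorm _
          _ ≤ ‖D‖ * ‖u‖ := mul_le_mul_of_nonneg_left (hJle u) (norm_nonneg D)
      · have : ε' ≤ ε / 2 := min_le_left _ _
        linarith
    refine ⟨A, Pw e x₀, f₀.comp (Iw e), hvA, hw₀n, hg1n, hg1w₀, hattW, ?_, ?_, hAT⟩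
    · have : ε' ≤ ε / 2 := min_le_left _ _
      linarith
    · have : ε' ≤ ε / 2 := min_le_left _ _
      linarith
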